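/- Let F be a finite field, let k < n be positive integers, let j ≥ 0, and let T be an l×l superregular matrix over F with l ≥ (j+1)(n−1). Let T' be the (j+1)(n−k) × (j+1)k submatrix of T obtained by intersecting the rows of T indexed by { a(n−1)+r : 0 ≤ a ≤ j, k ≤ r ≤ n−1 } with the columns of T indexed by { a(n−1)+c : 0 ≤ a ≤ j, 1 ≤ c ≤ k } (1-based indices, each index set taken in increasing order). Then T' is a lower block triangular Toeplitz matrix (its (n−k)×k blocks T'_{a,b} depend only on a−b and vanish for a < b), and the matrix [I_{(j+1)(n−k)} | T'] has the maximum span property: none of the first k columns of the block T' is contained in the linear span of any other (j+1)(n−k) − 1 columns of [I_{(j+1)(n−k)} | T']. -/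

import Mathlib

/-- A square matrix is a lower triangular Toeplitz matrix if its entries below
and on the diagonal depend only on the difference of the indices, determined by
the first column, and the entries above the diagonal vanish. -/
def IsLTToeplitz {F : Type*} [CommRing F] {m : ℕ}
    (A : Matrix (Fin m) (Fin m) F) : Prop :=
  ∃ a : ℕ → F, ∀ r c : Fin m,
    A r c = if (c : ℕ) ≤ (r : ℕ) then a ((r : ℕ) - (c : ℕ)) else 0

/-- A square matrix is superregular if it is a lower triangular Toeplitz matrix
and every proper submatrix (rows `i₁ < … < iₛ`, columns `j₁ < … < jₛ` with
`jᵥ ≤ iᵥ` for all `ν`) has a nonzero determinant. -/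
def Superregular {F : Type*} [CommRing F] {m : ℕ}
    (A : Matrix (Fin m) (Fin m) F) : Prop :=
  IsLTToeplitz A ∧
  ∀ (s : ℕ) (i j : Fin s → Fin m), StrictMono i → StrictMono j →
    (∀ ν : Fin s, (j ν : ℕ) ≤ (i ν : ℕ)) → (A.submatrix i j).det ≠ 0

open Finset

/-- Splitting a cardinality of a filter at a threshold. -/
lemma filter_card_split_lt {α : Type*} [DecidableEq α] (X : Finset α) (g : α → ℕ) {b B : ℕ}
    (h : b ≤ B) :
    (X.filter fun x => g x < B).card
      = (X.filter fun x => g x < b).card + (X.filter fun x => b ≤ g x ∧ g x < B).card := by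
  rw [← Finset.card_union_of_disjoint]
  · congr 1
    ext x
    simp only [Finset.mem_filter, Finset.mem_union]
    constructor
    · rintro ⟨hx, h2⟩; by_cases hb : g x < b
      · exact Or.inl ⟨hx, hb⟩
      · exact Or.inr ⟨hx, by omega, h2⟩
    · rintro (⟨hx, h2⟩ | ⟨hx, h2, h3⟩) <;> exact ⟨hx, by omega⟩
  · rw [Finset.disjoint_left]
    rintro x hx hx'
    simp only [Finset.mem_filter] at hx hx'
    omega

lemma filter_card_split_ge {α : Type*} [DecidableEq α] (X : Finset α) (g : α → ℕ) {b B : ℕ}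
    (h : b ≤ B) :
    (X.filter fun x => b ≤ g x).card
      = (X.filter fun x => B ≤ g x).card + (X.filter fun x => b ≤ g x ∧ g x < B).card := by
  rw [← Finset.card_union_of_disjoint]
  · congr 1
    ext x
    simp only [Finset.mem_filter, Finset.mem_union]
    constructor
    · rintro ⟨hx, h2⟩; by_cases hb : g x < B
      · exact Or.inr ⟨hx, h2, hb⟩
      · exact Or.inl ⟨hx, by omega⟩
    · rintro (⟨hx, h2⟩ | ⟨hx, h2, h3⟩) <;> exact ⟨hx, by omega⟩
  · rw [Finset.disjoint_left]
    rintro x hx hx'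
    simp only [Finset.mem_filter] at hx hx'
    omega

/-- In a finset of a linear order, the number of elements greater than the `i`-th
element (in the increasing enumeration) is `s' - 1 - i`. -/
lemma card_filter_gt_orderEmbOfFin {α : Type*} [LinearOrder α] (A : Finset α) {s' : ℕ}
    (hA : A.card = s') (i : Fin s') :
    (A.filter fun x => A.orderEmbOfFin hA i < x).card = s' - 1 - i := by
  classical
  have hAimg : A.filter (fun x => A.orderEmbOfFin hA i < x)
      = (Finset.Ioi i).image (A.orderEmbOfFin hA) := by
    ext x
    simp only [Finset.mem_filter, Finset.mem_image, Finset.mem_Ioi]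
    constructor
    · rintro ⟨hx, hlt⟩
      have : x ∈ Set.range (A.orderEmbOfFin hA) := by
        rw [Finset.range_orderEmbOfFin]; exact hx
      obtain ⟨μ, rfl⟩ := this
      exact ⟨μ, (A.orderEmbOfFin hA).strictMono.lt_iff_lt.mp hlt, rfl⟩
    · rintro ⟨μ, hμ, rfl⟩
      exact ⟨Finset.orderEmbOfFin_mem _ _ _, (A.orderEmbOfFin hA).strictMono hμ⟩
  rw [hAimg, Finset.card_image_of_injective _ (A.orderEmbOfFin hA).injective, Fin.card_Ioi]

/-- Hall-type domination lemma: if for each threshold `b` the columns with level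
`≥ b` are at most as many as the rows with level `≥ b`, then pairing the sorted
columns with the top part of the sorted rows gives levelwise domination. -/
lemma aux_domination {l : ℕ} (f : Fin l → ℕ) (hf : Monotone f)
    {Bc A : Finset (Fin l)} {s s' : ℕ} (hBc : Bc.card = s) (hA : A.card = s')
    (hall : ∀ b : ℕ, (Bc.filter fun x => b ≤ f x).card ≤ (A.filter fun x => b ≤ f x).card) :
    s ≤ s' ∧ ∀ (ν : Fin s) (h : (ν : ℕ) + (s' - s) < s'),
      f (Bc.orderEmbOfFin hBc ν) ≤ f (A.orderEmbOfFin hA ⟨(ν : ℕ) + (s' - s), h⟩) := by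
  have hss : s ≤ s' := by
    have := hall 0
    simpa [Finset.filter_true_of_mem, hBc, hA] using this
  refine ⟨hss, fun ν h => ?_⟩
  set Bν := f (Bc.orderEmbOfFin hBc ν) with hBν
  have step1 : s - (ν : ℕ) ≤ (Bc.filter fun x => Bν ≤ f x).card := by
    have hsub : (Finset.Ici ν).image (Bc.orderEmbOfFin hBc)
        ⊆ Bc.filter fun x => Bν ≤ f x := by
      intro x hx
      obtain ⟨μ, hμ, rfl⟩ := Finset.mem_image.mp hx
      rw [Finset.mem_Ici] at hμ
      refine Finset.mem_filter.mpr ⟨Finset.orderEmbOfFin_mem _ _ _, ?_⟩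
      exact hf ((Bc.orderEmbOfFin hBc).monotone hμ)
    calc s - (ν : ℕ) = (Finset.Ici ν).card := (Fin.card_Ici ν).symm
      _ = ((Finset.Ici ν).image (Bc.orderEmbOfFin hBc)).card :=
          (Finset.card_image_of_injective _ (Bc.orderEmbOfFin hBc).injective).symm
      _ ≤ _ := Finset.card_le_card hsub
  have step2 : s - (ν : ℕ) ≤ (A.filter fun x => Bν ≤ f x).card :=
    le_trans step1 (hall Bν)
  by_contra hcon
  push_neg at hcon
  set a₀ := A.orderEmbOfFin hA ⟨(ν : ℕ) + (s' - s), h⟩ with ha₀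
  have hUsub : (A.filter fun x => Bν ≤ f x) ⊆ A.filter fun x => a₀ < x := by
    intro x hx
    rw [Finset.mem_filter] at hx ⊢
    refine ⟨hx.1, ?_⟩
    by_contra hle
    push_neg at hle
    exact absurd (le_trans hx.2 (hf hle)) (by omega)
  have hcard := Finset.card_le_card hUsub
  rw [card_filter_gt_orderEmbOfFin] at hcard
  simp only at hcard
  omega

/-- From an `l × l` superregular matrix with `l ≥ (j+1)(n-1)` one extracts a
lower block triangular Toeplitz matrix `T'` (rows indexed, 1-based, by
`a(n-1)+r` for `0 ≤ a ≤ j`, `k ≤ r ≤ n-1`; columns by `a(n-1)+c` for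
`0 ≤ a ≤ j`, `1 ≤ c ≤ k`) such that `[I | T']` has the maximum span property.
Here `T'` is indexed by blocks: row `(a, r)` is the 0-based row
`a(n-1) + (k-1) + r` of `T` and column `(b, c)` is the 0-based column
`b(n-1) + c` of `T`. -/
theorem superregular_gives_maxSpan {F : Type*} [Field F] [Fintype F]
    {n k j l : ℕ} (hk : 0 < k) (hkn : k < n) (hl : (j + 1) * (n - 1) ≤ l)
    (T : Matrix (Fin l) (Fin l) F) (hT : Superregular T)
    (T' : Matrix (Fin (j + 1) × Fin (n - k)) (Fin (j + 1) × Fin k) F)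
    (hT' : ∀ (a : Fin (j + 1)) (r : Fin (n - k)) (b : Fin (j + 1)) (c : Fin k),
      T' (a, r) (b, c) =
        T ⟨(a : ℕ) * (n - 1) + k + (r : ℕ) - 1, by
            have h1 : (a : ℕ) ≤ j := Nat.lt_succ_iff.mp a.isLt
            have h2 : (r : ℕ) < n - k := r.isLt
            have h3 : (a : ℕ) * (n - 1) ≤ j * (n - 1) := Nat.mul_le_mul_right _ h1
            have h4 : (j + 1) * (n - 1) = j * (n - 1) + (n - 1) := by ring
            omega⟩
          ⟨(b : ℕ) * (n - 1) + (c : ℕ), by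
            have h1 : (b : ℕ) ≤ j := Nat.lt_succ_iff.mp b.isLt
            have h2 : (c : ℕ) < k := c.isLt
            have h3 : (b : ℕ) * (n - 1) ≤ j * (n - 1) := Nat.mul_le_mul_right _ h1
            have h4 : (j + 1) * (n - 1) = j * (n - 1) + (n - 1) := by ring
            omega⟩) :
    -- `T'` is lower block triangular:
    (∀ (a b : Fin (j + 1)) (r : Fin (n - k)) (c : Fin k),
        (a : ℕ) < (b : ℕ) → T' (a, r) (b, c) = 0) ∧
    -- the blocks of `T'` depend only on the difference `a - b`:
    (∀ (a b a' b' : Fin (j + 1)) (r : Fin (n - k)) (c : Fin k),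
        (a : ℤ) - (b : ℤ) = (a' : ℤ) - (b' : ℤ) →
        T' (a, r) (b, c) = T' (a', r) (b', c)) ∧
    -- `[I | T']` has the maximum span property:
    (∀ (c : Fin k)
        (S : Finset ((Fin (j + 1) × Fin (n - k)) ⊕ (Fin (j + 1) × Fin k))),
        S.card = (j + 1) * (n - k) - 1 → Sum.inr (0, c) ∉ S →
        (fun rr => Matrix.fromCols (1 : Matrix (Fin (j + 1) × Fin (n - k)) (Fin (j + 1) × Fin (n - k)) F) T' rr (Sum.inr (0, c))) ∉
          Submodule.span F
            ((fun cc => fun rr => Matrix.fromCols (1 : Matrix (Fin (j + 1) × Fin (n - k)) (Fin (j + 1) × Fin (n - k)) F) T' rr cc) '' ↑S)) := by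
  classical
  obtain ⟨⟨t, ht⟩, hTdet⟩ := hT
  -- Part 1
  have hzero : ∀ (a b : Fin (j + 1)) (r : Fin (n - k)) (c : Fin k),
      (a : ℕ) < (b : ℕ) → T' (a, r) (b, c) = 0 := by
    intro a b r c hab
    rw [hT', ht]
    have h5 : (a : ℕ) * (n - 1) + (n - 1) ≤ (b : ℕ) * (n - 1) := by
      have := Nat.mul_le_mul_right (n - 1) (show (a : ℕ) + 1 ≤ b by omega)
      rwa [add_mul, one_mul] at this
    have h2 : (r : ℕ) < n - k := r.isLt
    rw [if_neg]
    simp only [Fin.val_mk]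
    omega
  have hdiffeq : ∀ (a b a' b' : Fin (j + 1)) (r : Fin (n - k)) (c : Fin k),
      (a : ℤ) - (b : ℤ) = (a' : ℤ) - (b' : ℤ) →
      T' (a, r) (b, c) = T' (a', r) (b', c) := by
    intro a b a' b' r c heq
    rw [hT', hT', ht, ht]
    have key : (a : ℕ) * (n - 1) + (b' : ℕ) * (n - 1)
        = (a' : ℕ) * (n - 1) + (b : ℕ) * (n - 1) := by
      have h1 : (a : ℕ) + (b' : ℕ) = (a' : ℕ) + (b : ℕ) := by omega
      calc (a : ℕ) * (n - 1) + (b' : ℕ) * (n - 1)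
          = ((a : ℕ) + (b' : ℕ)) * (n - 1) := by ring
        _ = ((a' : ℕ) + (b : ℕ)) * (n - 1) := by rw [h1]
        _ = _ := by ring
    simp only [Fin.val_mk]
    have hcond : ((b : ℕ) * (n - 1) + (c : ℕ) ≤ (a : ℕ) * (n - 1) + k + (r : ℕ) - 1)
        ↔ ((b' : ℕ) * (n - 1) + (c : ℕ) ≤ (a' : ℕ) * (n - 1) + k + (r : ℕ) - 1) := by omega
    have hsub : ((a : ℕ) * (n - 1) + k + (r : ℕ) - 1) - ((b : ℕ) * (n - 1) + (c : ℕ))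
        = ((a' : ℕ) * (n - 1) + k + (r : ℕ) - 1) - ((b' : ℕ) * (n - 1) + (c : ℕ)) := by omega
    rw [hsub]
    exact if_congr hcond rfl rfl
  refine ⟨hzero, hdiffeq, ?_⟩
  intro c S hScard hcS hmem
  -- coefficients of the span representation
  obtain ⟨lc, hlcsupp, hlc⟩ := (Finsupp.mem_span_image_iff_linearCombination F).1 hmem
  -- row evaluation of the span relation
  have hrow : ∀ i : Fin (j + 1) × Fin (n - k), Sum.inl i ∉ S →
      T' i (0, c) = ∑ q ∈ S.toRight, lc (Sum.inr q) * T' i q := by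
    intro i hiS
    have h1 := congrFun hlc i
    rw [Finsupp.linearCombination_apply, Finsupp.sum, Finset.sum_apply] at h1
    simp only [Pi.smul_apply, smul_eq_mul] at h1
    have hsupp : lc.support ⊆ S := fun u hu => by exact_mod_cast hlcsupp hu
    have h3 : ∑ u ∈ S, lc u
          * Matrix.fromCols (1 : Matrix (Fin (j + 1) × Fin (n - k)) (Fin (j + 1) × Fin (n - k)) F) T' i u
        = ∑ u ∈ lc.support, lc u
          * Matrix.fromCols (1 : Matrix (Fin (j + 1) × Fin (n - k)) (Fin (j + 1) × Fin (n - k)) F) T' i u := by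
      refine (Finset.sum_subset hsupp (fun u hu hnu => ?_)).symm
      rw [Finsupp.notMem_support_iff.mp hnu, zero_mul]
    rw [← h3] at h1
    rw [← Finset.toLeft_disjSum_toRight (u := S), Finset.sum_disjSum] at h1
    have h4 : ∑ p ∈ S.toLeft, lc (Sum.inl p)
        * Matrix.fromCols (1 : Matrix (Fin (j + 1) × Fin (n - k)) (Fin (j + 1) × Fin (n - k)) F) T' i (Sum.inl p) = 0 := by
      refine Finset.sum_eq_zero (fun p hp => ?_)
      rw [Matrix.fromCols_apply_inl, Matrix.one_apply_ne, mul_zero]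
      intro hip
      exact hiS (by rw [hip]; exact Finset.mem_toLeft.mp hp)
    rw [h4, zero_add] at h1
    simp only [Matrix.fromCols_apply_inr] at h1
    exact h1.symm
  -- index maps into Fin l
  have hrb : ∀ (a : Fin (j + 1)) (r : Fin (n - k)), (a : ℕ) * (n - 1) + k + (r : ℕ) - 1 < l := by
    intro a r
    have h1 : (a : ℕ) ≤ j := Nat.lt_succ_iff.mp a.isLt
    have h3 : (a : ℕ) * (n - 1) ≤ j * (n - 1) := Nat.mul_le_mul_right _ h1
    have h4 : (j + 1) * (n - 1) = j * (n - 1) + (n - 1) := by ring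
    have h2 : (r : ℕ) < n - k := r.isLt
    omega
  have hcb : ∀ (b : Fin (j + 1)) (c' : Fin k), (b : ℕ) * (n - 1) + (c' : ℕ) < l := by
    intro b c'
    have h1 : (b : ℕ) ≤ j := Nat.lt_succ_iff.mp b.isLt
    have h3 : (b : ℕ) * (n - 1) ≤ j * (n - 1) := Nat.mul_le_mul_right _ h1
    have h4 : (j + 1) * (n - 1) = j * (n - 1) + (n - 1) := by ring
    have h2 : (c' : ℕ) < k := c'.isLt
    omega
  set ρ : Fin (j + 1) × Fin (n - k) → Fin l :=
    fun i => ⟨(i.1 : ℕ) * (n - 1) + k + (i.2 : ℕ) - 1, hrb i.1 i.2⟩ with hρdef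
  set κ : Fin (j + 1) × Fin k → Fin l :=
    fun q => ⟨(q.1 : ℕ) * (n - 1) + (q.2 : ℕ), hcb q.1 q.2⟩ with hκdef
  have hdiv : ∀ (b e : ℕ), e < n - 1 → (b * (n - 1) + e) / (n - 1) = b := by
    intro b e he
    rw [mul_comm, Nat.mul_add_div (by omega), Nat.div_eq_of_lt he, add_zero]
  have hmod : ∀ (b e : ℕ), e < n - 1 → (b * (n - 1) + e) % (n - 1) = e := by
    intro b e he
    rw [mul_comm, Nat.mul_add_mod, Nat.mod_eq_of_lt he]
  set f : Fin l → ℕ := fun x => (x : ℕ) / (n - 1) with hfdef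
  have hfmono : Monotone f := fun x y hxy => Nat.div_le_div_right hxy
  have hfρ : ∀ i, f (ρ i) = (i.1 : ℕ) := by
    intro i
    show ((i.1 : ℕ) * (n - 1) + k + (i.2 : ℕ) - 1) / (n - 1) = i.1
    have h2 : (i.2 : ℕ) < n - k := i.2.isLt
    have he : (i.1 : ℕ) * (n - 1) + k + (i.2 : ℕ) - 1 = (i.1 : ℕ) * (n - 1) + (k + (i.2 : ℕ) - 1) := by
      omega
    rw [he, hdiv _ _ (by omega)]
  have hfκ : ∀ q, f (κ q) = (q.1 : ℕ) := by
    intro q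
    show ((q.1 : ℕ) * (n - 1) + (q.2 : ℕ)) / (n - 1) = q.1
    have h2 : (q.2 : ℕ) < k := q.2.isLt
    rw [hdiv _ _ (by omega)]
  have hκinj : Function.Injective κ := by
    intro q q' h
    have hv : (q.1 : ℕ) * (n - 1) + (q.2 : ℕ) = (q'.1 : ℕ) * (n - 1) + (q'.2 : ℕ) :=
      congrArg Fin.val h
    have hq2 : (q.2 : ℕ) < k := q.2.isLt
    have hq2' : (q'.2 : ℕ) < k := q'.2.isLt
    have h1 : (q.1 : ℕ) = q'.1 := by
      rw [← hdiv q.1 q.2 (by omega), hv, hdiv _ _ (by omega)]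
    have h2 : (q.2 : ℕ) = q'.2 := by
      rw [← hmod q.1 q.2 (by omega), hv, hmod _ _ (by omega)]
    exact Prod.ext (Fin.ext h1) (Fin.ext h2)
  have hρinj : Function.Injective ρ := by
    intro i i' h
    have hv : (i.1 : ℕ) * (n - 1) + k + (i.2 : ℕ) - 1 = (i'.1 : ℕ) * (n - 1) + k + (i'.2 : ℕ) - 1 :=
      congrArg Fin.val h
    have hi2 : (i.2 : ℕ) < n - k := i.2.isLt
    have hi2' : (i'.2 : ℕ) < n - k := i'.2.isLt
    have hv2 : (i.1 : ℕ) * (n - 1) + (k + (i.2 : ℕ) - 1) = (i'.1 : ℕ) * (n - 1) + (k + (i'.2 : ℕ) - 1) := by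
      omega
    have h1 : (i.1 : ℕ) = i'.1 := by
      rw [← hdiv i.1 (k + (i.2 : ℕ) - 1) (by omega), hv2, hdiv _ _ (by omega)]
    have h2 : k + (i.2 : ℕ) - 1 = k + (i'.2 : ℕ) - 1 := by
      rw [← hmod i.1 (k + (i.2 : ℕ) - 1) (by omega), hv2, hmod _ _ (by omega)]
    exact Prod.ext (Fin.ext h1) (Fin.ext (by omega))
  -- counting
  set SR := S.toRight with hSRdef
  set R : Finset (Fin (j + 1) × Fin (n - k)) := S.toLeftᶜ with hRdef
  have hc0SR : (0, c) ∉ SR := fun h => hcS (Finset.mem_toRight.mp h)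
  have hcardR : R.card = SR.card + 1 := by
    have h1 := Finset.card_toLeft_add_card_toRight (u := S)
    rw [← hSRdef] at h1
    have h2 : S.toLeft.card + R.card = (j + 1) * (n - k) := by
      rw [hRdef, Finset.card_add_card_compl]
      simp
    have h5 : 0 < (j + 1) * (n - k) := Nat.mul_pos (by omega) (by omega)
    omega
  -- choose the cut threshold B
  set p : ℕ → ℕ := fun b => (R.filter fun i => (i.1 : ℕ) < b).card
      + (SR.filter fun q => b ≤ (q.1 : ℕ)).card with hpdef
  obtain ⟨B, hBmem, hBmax⟩ := Finset.exists_max_image (Finset.Icc 1 (j + 1)) p ⟨1, by simp⟩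
  have hB1 : 1 ≤ B := (Finset.mem_Icc.mp hBmem).1
  have hB2 : B ≤ j + 1 := (Finset.mem_Icc.mp hBmem).2
  have hpj : p (j + 1) = R.card := by
    have e1 : R.filter (fun i => (i.1 : ℕ) < j + 1) = R :=
      Finset.filter_true_of_mem (fun i _ => i.1.isLt)
    have e2 : SR.filter (fun q => j + 1 ≤ (q.1 : ℕ)) = ∅ :=
      Finset.filter_false_of_mem (fun q _ => by have := q.1.isLt; omega)
    rw [hpdef]
    simp only [e1, e2, Finset.card_empty, add_zero]
  have hSRsplit : SR.card = (SR.filter fun q => (q.1 : ℕ) < B).card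
      + (SR.filter fun q => B ≤ (q.1 : ℕ)).card := by
    have := Finset.card_filter_add_card_filter_not (s := SR)
      (p := fun q => (q.1 : ℕ) < B)
    have he : SR.filter (fun q => ¬((q.1 : ℕ) < B)) = SR.filter (fun q => B ≤ (q.1 : ℕ)) := by
      apply Finset.filter_congr
      intro q _
      constructor <;> (intro; omega)
    rw [he] at this
    omega
  have hmain : (SR.filter fun q => (q.1 : ℕ) < B).card + 1 ≤ (R.filter fun i => (i.1 : ℕ) < B).card := by
    have h1 : p (j + 1) ≤ p B := hBmax _ (by simp [Finset.mem_Icc])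
    rw [hpj, hpdef] at h1
    simp only at h1
    omega
  -- the final column and row sets inside `Fin l`
  set Wc : Finset (Fin l) := insert (κ (0, c)) ((SR.filter fun q => (q.1 : ℕ) < B).image κ)
    with hWdef
  set Ar : Finset (Fin l) := (R.filter fun i => (i.1 : ℕ) < B).image ρ with hArdef
  have hcnot : κ (0, c) ∉ (SR.filter fun q => (q.1 : ℕ) < B).image κ := by
    intro hx
    obtain ⟨q, hq, hqe⟩ := Finset.mem_image.mp hx
    exact hc0SR (by rw [← hκinj hqe]; exact (Finset.mem_filter.mp hq).1)
  have hWcard : Wc.card = (SR.filter fun q => (q.1 : ℕ) < B).card + 1 := by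
    rw [hWdef, Finset.card_insert_of_notMem hcnot, Finset.card_image_of_injective _ hκinj]
  have hArcard : Ar.card = (R.filter fun i => (i.1 : ℕ) < B).card := by
    rw [hArdef, Finset.card_image_of_injective _ hρinj]
  -- Hall-type counting condition
  have hall : ∀ b : ℕ, (Wc.filter fun x => b ≤ f x).card ≤ (Ar.filter fun x => b ≤ f x).card := by
    intro b
    rcases Nat.eq_zero_or_pos b with rfl | hb
    · rw [Finset.filter_true_of_mem (fun _ _ => Nat.zero_le _),
        Finset.filter_true_of_mem (fun _ _ => Nat.zero_le _), hWcard, hArcard]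
      omega
    · have hWfilter : Wc.filter (fun x => b ≤ f x)
          = (SR.filter fun q => b ≤ (q.1 : ℕ) ∧ (q.1 : ℕ) < B).image κ := by
        rw [hWdef, Finset.filter_insert, if_neg (by rw [hfκ]; simp; omega),
          Finset.filter_image, Finset.filter_filter]
        congr 1
        apply Finset.filter_congr
        intro q _
        rw [hfκ]
        constructor
        · rintro ⟨h1', h2'⟩; exact ⟨h2', h1'⟩
        · rintro ⟨h1', h2'⟩; exact ⟨h2', h1'⟩
      have hArfilter : Ar.filter (fun x => b ≤ f x)
          = (R.filter fun i => b ≤ (i.1 : ℕ) ∧ (i.1 : ℕ) < B).image ρ := by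
        rw [hArdef, Finset.filter_image, Finset.filter_filter]
        congr 1
        apply Finset.filter_congr
        intro i _
        rw [hfρ]
        constructor
        · rintro ⟨h1', h2'⟩; exact ⟨h2', h1'⟩
        · rintro ⟨h1', h2'⟩; exact ⟨h2', h1'⟩
      rw [hWfilter, hArfilter, Finset.card_image_of_injective _ hκinj,
        Finset.card_image_of_injective _ hρinj]
      rcases le_or_gt B b with hBb | hbB
      · have : SR.filter (fun q => b ≤ (q.1 : ℕ) ∧ (q.1 : ℕ) < B) = ∅ :=
          Finset.filter_false_of_mem (fun q _ => by omega)
        rw [this]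
        simp
      · have hmem' : b ∈ Finset.Icc 1 (j + 1) := Finset.mem_Icc.mpr ⟨hb, by omega⟩
        have h1 : p b ≤ p B := hBmax _ hmem'
        rw [hpdef] at h1
        simp only at h1
        have h2 := filter_card_split_lt R (fun i => (i.1 : ℕ)) (le_of_lt hbB)
        have h3 := filter_card_split_ge SR (fun q => (q.1 : ℕ)) (le_of_lt hbB)
        omega
  obtain ⟨hss', hdom⟩ := aux_domination f hfmono hWcard hArcard hall
  set s := (SR.filter fun q => (q.1 : ℕ) < B).card + 1 with hsdef
  set s' := (R.filter fun i => (i.1 : ℕ) < B).card with hs'def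
  set cj : Fin s → Fin l := ⇑(Wc.orderEmbOfFin hWcard) with hcjdef
  set ri : Fin s → Fin l := fun ν => Ar.orderEmbOfFin hArcard
    ⟨(ν : ℕ) + (s' - s), by have := ν.isLt; omega⟩ with hridef
  have hrimono : StrictMono ri := by
    intro ν ν' hνν'
    rw [hridef]
    apply (Ar.orderEmbOfFin hArcard).strictMono
    rw [Fin.mk_lt_mk]
    rw [Fin.lt_def] at hνν'
    omega
  have hcjmono : StrictMono cj := by
    rw [hcjdef]
    exact (Wc.orderEmbOfFin hWcard).strictMono
  have hmemW : ∀ ν : Fin s, cj ν ∈ Wc := by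
    intro ν
    rw [hcjdef]
    exact Finset.orderEmbOfFin_mem _ _ _
  have hmemA : ∀ ν : Fin s, ri ν ∈ Ar := by
    intro ν
    rw [hridef]
    exact Finset.orderEmbOfFin_mem _ _ _
  have hprop : ∀ ν : Fin s, (cj ν : ℕ) ≤ (ri ν : ℕ) := by
    intro ν
    have hW' := hmemW ν
    have hA' := hmemA ν
    rw [hWdef, Finset.mem_insert] at hW'
    have hq : ∃ q : Fin (j + 1) × Fin k, cj ν = κ q := by
      rcases hW' with h | h
      · exact ⟨(0, c), h⟩
      · obtain ⟨q, _, hqe⟩ := Finset.mem_image.mp h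
        exact ⟨q, hqe.symm⟩
    obtain ⟨q, hq⟩ := hq
    rw [hArdef] at hA'
    obtain ⟨i, _, hie⟩ := Finset.mem_image.mp hA'
    have hdom' : f (cj ν) ≤ f (ri ν) := hdom ν (by have := ν.isLt; omega)
    rw [hq, ← hie, hfκ, hfρ] at hdom'
    rw [hq, ← hie]
    show (q.1 : ℕ) * (n - 1) + (q.2 : ℕ) ≤ (i.1 : ℕ) * (n - 1) + k + (i.2 : ℕ) - 1
    have h5 := Nat.mul_le_mul_right (n - 1) hdom'
    have hq2 : (q.2 : ℕ) < k := q.2.isLt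
    omega
  have hdetne := hTdet s ri cj hrimono hcjmono hprop
  apply hdetne
  rw [← Matrix.exists_mulVec_eq_zero_iff]
  -- a decoding map for columns
  obtain ⟨dec, hdecκ⟩ : ∃ g : Fin l → Fin (j + 1) × Fin k, ∀ q, g (κ q) = q := by
    refine ⟨fun x => (⟨min ((x : ℕ) / (n - 1)) j, by omega⟩,
                      ⟨min ((x : ℕ) % (n - 1)) (k - 1), by omega⟩), fun q => ?_⟩
    have hq2 : (q.2 : ℕ) < k := q.2.isLt
    have hq1 : (q.1 : ℕ) ≤ j := Nat.lt_succ_iff.mp q.1.isLt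
    apply Prod.ext <;> apply Fin.ext
    · show min ((κ q : ℕ) / (n - 1)) j = (q.1 : ℕ)
      rw [show ((κ q : ℕ)) = (q.1 : ℕ) * (n - 1) + (q.2 : ℕ) from rfl, hdiv _ _ (by omega)]
      exact min_eq_left hq1
    · show min ((κ q : ℕ) % (n - 1)) (k - 1) = (q.2 : ℕ)
      rw [show ((κ q : ℕ)) = (q.1 : ℕ) * (n - 1) + (q.2 : ℕ) from rfl, hmod _ _ (by omega)]
      exact min_eq_left (by omega)
  refine ⟨fun μ => if cj μ = κ (0, c) then -1 else lc (Sum.inr (dec (cj μ))), ?_, ?_⟩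
  · -- the dependency vector is nonzero
    have hmem0 : κ (0, c) ∈ Wc := by rw [hWdef]; exact Finset.mem_insert_self _ _
    have hrange : κ (0, c) ∈ Set.range cj := by
      rw [hcjdef, Finset.range_orderEmbOfFin]
      exact hmem0
    obtain ⟨μ₀, hμ₀⟩ := hrange
    intro h0
    have h2' := congrFun h0 μ₀
    simp [hμ₀] at h2'
  · -- it is indeed a dependency among the columns of the submatrix
    funext ν
    have hA' := hmemA ν
    rw [hArdef] at hA'
    obtain ⟨i, hiRB, hie⟩ := Finset.mem_image.mp hA'
    obtain ⟨hiR, hiB⟩ := Finset.mem_filter.mp hiRB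
    have hiSL : Sum.inl i ∉ S := by
      rw [hRdef] at hiR
      have := Finset.mem_compl.mp hiR
      exact fun hS => this (Finset.mem_toLeft.mpr hS)
    have hcjinj : Function.Injective cj := by
      rw [hcjdef]
      exact (Wc.orderEmbOfFin hWcard).injective
    have himg : Finset.image cj Finset.univ = Wc := by
      ext x
      simp only [Finset.mem_image, Finset.mem_univ, true_and]
      constructor
      · rintro ⟨μ, rfl⟩
        exact hmemW μ
      · intro hx
        have : x ∈ Set.range cj := by rw [hcjdef, Finset.range_orderEmbOfFin]; exact hx
        obtain ⟨μ, hμ⟩ := this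
        exact ⟨μ, hμ⟩
    show (∑ μ : Fin s, T.submatrix ri cj ν μ
        * (if cj μ = κ (0, c) then -1 else lc (Sum.inr (dec (cj μ))))) = 0
    simp only [Matrix.submatrix_apply]
    have hsum1 : (∑ μ : Fin s, T (ri ν) (cj μ)
          * (if cj μ = κ (0, c) then -1 else lc (Sum.inr (dec (cj μ)))))
        = ∑ x ∈ Wc, T (ri ν) x * (if x = κ (0, c) then -1 else lc (Sum.inr (dec x))) := by
      rw [← himg, Finset.sum_image (fun μ _ μ' _ h => hcjinj h)]
    rw [hsum1, hWdef, Finset.sum_insert hcnot,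
      Finset.sum_image (fun q _ q' _ h => hκinj h), if_pos rfl]
    have hterm : ∀ q ∈ SR.filter (fun q => (q.1 : ℕ) < B),
        T (ri ν) (κ q) * (if κ q = κ (0, c) then -1 else lc (Sum.inr (dec (κ q))))
          = lc (Sum.inr q) * T' i q := by
      intro q hq
      rw [if_neg (fun h => hc0SR (by rw [← hκinj h]; exact (Finset.mem_filter.mp hq).1)),
        hdecκ, mul_comm]
      congr 1
      rw [← hie]
      exact (hT' i.1 i.2 q.1 q.2).symm
    rw [Finset.sum_congr rfl hterm]
    have hT0 : T (ri ν) (κ (0, c)) = T' i (0, c) := by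
      rw [← hie]
      exact (hT' i.1 i.2 0 c).symm
    rw [hT0]
    have hzero2 : ∑ q ∈ SR.filter (fun q => ¬(q.1 : ℕ) < B), lc (Sum.inr q) * T' i q = 0 := by
      refine Finset.sum_eq_zero (fun q hq => ?_)
      have h1' : (i.1 : ℕ) < (q.1 : ℕ) := by
        have := (Finset.mem_filter.mp hq).2
        omega
      have h2' : T' i q = 0 := hzero i.1 q.1 i.2 q.2 h1'
      rw [h2', mul_zero]
    have hsplit := Finset.sum_filter_add_sum_filter_not SR (fun q => (q.1 : ℕ) < B)
      (fun q => lc (Sum.inr q) * T' i q)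
    have hrow' := hrow i hiSL
    rw [← hsplit, hzero2, add_zero] at hrow'
    rw [← hrow']
    ring
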